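/- arXiv:2512.08278 — 5 statements merged into one kernel-verified Lean document; each statement's English description precedes it below -/
import Mathlib

section
/- Let p be an odd prime, f(T) ∈ ℤ_p[[T]] a power series, and α ∈ ℤ_p. Then at least one of the following holds: dim_{𝔽_p} ℤ_p[[S,T]]/I_α(f) ≤ 1, or dim_{𝔽_p} ℤ_p[[S,T]]/I_{−α}(f) ≤ 1. (Lemma 'powerseries dimension', the key lemma of the paper.) -/
open PowerSeries

/-- The two-variable power series ring `ℤ_p[[S,T]]`, realized as `(ℤ_p[[T]])[[S]]`:
the outer variable `PowerSeries.X` is `S`, the inner `ℤ_p[[T]] = PowerSeries ℤ_[p]` is the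
subring of series not involving `S` (included via `PowerSeries.C`), and `T` is
`C (PowerSeries.X)`. -/
abbrev Lambda (p : ℕ) [Fact p.Prime] : Type := PowerSeries (PowerSeries ℤ_[p])

/-- `(1+S)^α := Σ_{i≥0} C(α,i) S^i ∈ ℤ_p[[S,T]]`, where `C(α,i) = Ring.choose α i ∈ ℤ_p` is the
`p`-adic binomial coefficient `α(α−1)⋯(α−i+1)/i!`. -/
noncomputable def onePlusSPow (p : ℕ) [Fact p.Prime] (α : ℤ_[p]) : Lambda p :=
  PowerSeries.mk fun i => PowerSeries.C (R := ℤ_[p]) (Ring.choose α i)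

/-- The variable `T` of `ℤ_p[[S,T]]`. -/
noncomputable def Tvar (p : ℕ) [Fact p.Prime] : Lambda p :=
  PowerSeries.C (R := PowerSeries ℤ_[p]) PowerSeries.X

/-- The ideal `I_α(f) = ((1+S)^α(1+T) − 1, S − f(T), p)` of `ℤ_p[[S,T]]`. -/
noncomputable def Ialpha (p : ℕ) [Fact p.Prime] (f : PowerSeries ℤ_[p]) (α : ℤ_[p]) :
    Ideal (Lambda p) :=
  Ideal.span {onePlusSPow p α * (1 + Tvar p) - 1,
    PowerSeries.X - PowerSeries.C (R := PowerSeries ℤ_[p]) f, (p : Lambda p)}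

lemma p_mem_Ialpha (p : ℕ) [Fact p.Prime] (f : PowerSeries ℤ_[p]) (α : ℤ_[p]) :
    (p : Lambda p) ∈ Ialpha p f α :=
  Ideal.subset_span (by simp)

/-- The dimension of `R/I` as an `𝔽_p = ZMod p` vector space, for an ideal `I` of `R`
containing `p` (so that the quotient ring is naturally an `𝔽_p`-vector space). -/
noncomputable def fpDim (p : ℕ) {R : Type} [CommRing R] (I : Ideal R)
    (h : (p : R) ∈ I) : Cardinal :=
  letI : Module (ZMod p) (R ⧸ I) := AddCommGroup.zmodModule (fun x => by
    obtain ⟨y, rfl⟩ := Ideal.Quotient.mk_surjective x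
    rw [← map_nsmul, nsmul_eq_mul]
    exact Ideal.Quotient.eq_zero_iff_mem.mpr (I.mul_mem_right y h))
  Module.rank (ZMod p) (R ⧸ I)

open Finset

section Key
variable {k : Type} [CommRing k]

lemma coeff_mul_pow_eq_zero {f : k⟦X⟧} (hf : constantCoeff (R := k) f = 0)
    {n i : ℕ} (h : n < i) (a : k⟦X⟧) : (coeff (R := k) n) (a * f ^ i) = 0 := by
  have h1 : (X : k⟦X⟧) ^ i ∣ a * f ^ i :=
    Dvd.dvd.mul_left (pow_dvd_pow_of_dvd (X_dvd_iff.mpr hf) i) a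
  exact X_pow_dvd_iff.mp h1 n h

/-- Substitution of `f` (with zero constant term) for the outer variable. -/
noncomputable def ev (f : k⟦X⟧) (F : (k⟦X⟧)⟦X⟧) : k⟦X⟧ :=
  PowerSeries.mk fun n => ∑ i ∈ range (n+1), coeff (R := k) n (coeff i F * f ^ i)

lemma coeff_mul_ev {f : k⟦X⟧} (hf : constantCoeff (R := k) f = 0) (G : ℕ → k⟦X⟧) (n : ℕ) :
    coeff (R := k) n (f * PowerSeries.mk fun l => ∑ i ∈ range (l+1), coeff (R := k) l (G i * f ^ i))
      = ∑ i ∈ range (n+1), coeff (R := k) n (G i * f ^ (i+1)) := by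
  rw [coeff_mul]
  have step : ∀ x ∈ antidiagonal n,
      coeff (R := k) x.1 f * coeff (R := k) x.2 (PowerSeries.mk fun l => ∑ i ∈ range (l+1), coeff (R := k) l (G i * f ^ i))
        = ∑ i ∈ range (n+1), coeff (R := k) x.1 f * coeff (R := k) x.2 (G i * f ^ i) := by
    rintro ⟨a, b⟩ hab
    rw [HasAntidiagonal.mem_antidiagonal] at hab
    rw [coeff_mk, Finset.mul_sum]
    apply Finset.sum_subset
    · exact range_subset_range.mpr (by omega)
    · intro i hi hib
      rw [mem_range, not_lt] at hib
      rw [coeff_mul_pow_eq_zero hf (by omega) (G i), mul_zero]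
  rw [Finset.sum_congr rfl step, Finset.sum_comm]
  refine Finset.sum_congr rfl fun i _ => ?_
  have : G i * f ^ (i+1) = f * (G i * f ^ i) := by ring
  rw [this, coeff_mul]

lemma key_decomp {f : k⟦X⟧} (hf : constantCoeff (R := k) f = 0) (F : (k⟦X⟧)⟦X⟧) :
    F - C (ev f F) = (X - C f) *
      (PowerSeries.mk fun j => PowerSeries.mk fun n =>
        ∑ i ∈ range (n+1), coeff (R := k) n (coeff (i+j+1) F * f ^ i)) := by
  apply PowerSeries.ext; intro j
  rw [sub_mul, map_sub, map_sub, coeff_C_mul]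
  cases j with
  | zero =>
    rw [coeff_zero_X_mul, coeff_zero_C, zero_sub, coeff_mk]
    apply PowerSeries.ext; intro n
    rw [map_sub, map_neg]
    have hm := coeff_mul_ev hf (fun i => coeff (i+0+1) F) n
    rw [hm, ev, coeff_mk]
    have e1 : ∑ i ∈ range (n+2), coeff (R := k) n (coeff i F * f ^ i)
        = (∑ i ∈ range (n+1), coeff (R := k) n (coeff (i+0+1) F * f ^ (i+1)))
          + coeff (R := k) n (coeff 0 F * f ^ 0) :=
      Finset.sum_range_succ' _ (n+1)
    have e2 : ∑ i ∈ range (n+2), coeff (R := k) n (coeff i F * f ^ i)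
        = (∑ i ∈ range (n+1), coeff (R := k) n (coeff i F * f ^ i))
          + coeff (R := k) n (coeff (n+1) F * f ^ (n+1)) :=
      Finset.sum_range_succ _ (n+1)
    rw [coeff_mul_pow_eq_zero hf (by omega)] at e2
    rw [pow_zero, mul_one] at e1
    linear_combination e2 - e1
  | succ j =>
    rw [coeff_succ_X_mul, coeff_C, if_neg (Nat.succ_ne_zero j), sub_zero, coeff_mk, coeff_mk]
    apply PowerSeries.ext; intro n
    rw [map_sub, coeff_mk]
    have hm := coeff_mul_ev hf (fun i => coeff (i+(j+1)+1) F) n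
    rw [hm]
    have e1 : ∑ i ∈ range (n+2), coeff (R := k) n (coeff (i+j+1) F * f ^ i)
        = (∑ i ∈ range (n+1), coeff (R := k) n (coeff ((i+1)+j+1) F * f ^ (i+1)))
          + coeff (R := k) n (coeff (0+j+1) F * f ^ 0) :=
      Finset.sum_range_succ' (fun i => coeff (R := k) n (coeff (i+j+1) F * f ^ i)) (n+1)
    have e2 : ∑ i ∈ range (n+2), coeff (R := k) n (coeff (i+j+1) F * f ^ i)
        = (∑ i ∈ range (n+1), coeff (R := k) n (coeff (i+j+1) F * f ^ i))
          + coeff (R := k) n (coeff ((n+1)+j+1) F * f ^ (n+1)) :=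
      Finset.sum_range_succ _ (n+1)
    rw [coeff_mul_pow_eq_zero hf (by omega)] at e2
    rw [pow_zero, mul_one] at e1
    have hre : ∀ i : ℕ, (i+1)+j+1 = i+(j+1)+1 := fun i => by omega
    simp only [hre] at e1
    have hre2 : (0:ℕ)+j+1 = j+1 := by omega
    rw [hre2] at e1
    linear_combination e2 - e1
end Key

section P
variable (p : ℕ) [Fact p.Prime]

lemma gen1_mem (f : PowerSeries ℤ_[p]) (α : ℤ_[p]) :
    onePlusSPow p α * (1 + Tvar p) - 1 ∈ Ialpha p f α :=
  Ideal.subset_span (Set.mem_insert _ _)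

lemma gen2_mem (f : PowerSeries ℤ_[p]) (α : ℤ_[p]) :
    PowerSeries.X - PowerSeries.C (R := PowerSeries ℤ_[p]) f ∈ Ialpha p f α :=
  Ideal.subset_span (Set.mem_insert_of_mem _ (Set.mem_insert _ _))

/-- Reduction mod `p` of `ℤ_p[[S,T]]`, landing in `𝔽_p[[S,T]]`. -/
noncomputable def rr : Lambda p →+* PowerSeries (PowerSeries (ZMod p)) :=
  PowerSeries.map (PowerSeries.map (PadicInt.toZMod))

lemma toZMod_surjective : Function.Surjective (PadicInt.toZMod : ℤ_[p] → ZMod p) := by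
  intro y
  refine ⟨((y.val : ℕ) : ℤ_[p]), ?_⟩
  rw [map_natCast]
  exact ZMod.natCast_rightInverse y

lemma psmap_surjective {R S : Type} [CommRing R] [CommRing S] (g : R →+* S)
    (hg : Function.Surjective g) : Function.Surjective (PowerSeries.map g) := by
  intro G
  refine ⟨PowerSeries.mk fun n => Classical.choose (hg (coeff (R := S) n G)), ?_⟩
  apply PowerSeries.ext; intro n
  rw [coeff_map, coeff_mk]
  exact Classical.choose_spec (hg (coeff (R := S) n G))

lemma rr_surjective : Function.Surjective (rr p) :=
  psmap_surjective _ (psmap_surjective _ (toZMod_surjective p))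

lemma p_dvd_of_toZMod_eq_zero {x : ℤ_[p]} (h : PadicInt.toZMod x = 0) : (p : ℤ_[p]) ∣ x := by
  have : x ∈ RingHom.ker (PadicInt.toZMod : ℤ_[p] →+* ZMod p) := h
  rw [PadicInt.ker_toZMod, PadicInt.maximalIdeal_eq_span_p, Ideal.mem_span_singleton] at this
  exact this

lemma coeff_rr (F : Lambda p) (i n : ℕ) :
    coeff (R := ZMod p) n (coeff i (rr p F)) = PadicInt.toZMod (coeff (R := ℤ_[p]) n (coeff i F)) := by
  rw [rr, coeff_map, coeff_map]

lemma natCast_Lambda (n : ℕ) : (n : Lambda p) = C (C (n : ℤ_[p])) := by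
  rw [map_natCast, map_natCast]

lemma mem_span_p_of_rr_eq_zero {F : Lambda p} (h : rr p F = 0) :
    F ∈ Ideal.span {(p : Lambda p)} := by
  rw [Ideal.mem_span_singleton]
  have hc : ∀ i n, (p : ℤ_[p]) ∣ coeff (R := ℤ_[p]) n (coeff i F) := by
    intro i n
    apply p_dvd_of_toZMod_eq_zero
    rw [← coeff_rr, h]
    simp
  refine ⟨PowerSeries.mk fun i => PowerSeries.mk fun n => Classical.choose (hc i n), ?_⟩
  apply PowerSeries.ext; intro i
  apply PowerSeries.ext; intro n
  rw [natCast_Lambda, coeff_C_mul, coeff_C_mul, coeff_mk, coeff_mk]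
  exact Classical.choose_spec (hc i n)

lemma span_p_le (f : PowerSeries ℤ_[p]) (α : ℤ_[p]) :
    Ideal.span {(p : Lambda p)} ≤ Ialpha p f α := by
  rw [Ideal.span_le, Set.singleton_subset_iff]
  exact p_mem_Ialpha p f α

lemma rr_gen2 (f : PowerSeries ℤ_[p]) :
    rr p (PowerSeries.X - PowerSeries.C (R := PowerSeries ℤ_[p]) f)
      = PowerSeries.X - C (PowerSeries.map PadicInt.toZMod f) := by
  rw [rr, map_sub, PowerSeries.map_C]
  congr 1
  exact PowerSeries.map_X _

lemma rr_gen1 (α : ℤ_[p]) :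
    rr p (onePlusSPow p α * (1 + Tvar p) - 1)
      = (PowerSeries.mk fun i => C (PadicInt.toZMod (Ring.choose α i)))
            * C (1 + PowerSeries.X) - 1 := by
  have e1 : PowerSeries.map (PowerSeries.map PadicInt.toZMod) (onePlusSPow p α)
      = PowerSeries.mk fun i => C (PadicInt.toZMod (Ring.choose α i)) := by
    apply PowerSeries.ext; intro i
    rw [coeff_map, onePlusSPow, coeff_mk, coeff_mk, PowerSeries.map_C]
  have e2 : PowerSeries.map (PowerSeries.map PadicInt.toZMod) (1 + Tvar p)
      = C (1 + PowerSeries.X) := by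
    rw [map_add, map_one, Tvar, PowerSeries.map_C, PowerSeries.map_X, map_add, map_one]
  rw [rr, map_sub, map_one, map_mul, e1, e2]

lemma rr_Tvar : rr p (Tvar p) = C PowerSeries.X := by
  rw [rr, Tvar, PowerSeries.map_C, PowerSeries.map_X]

lemma Tvar_mem (f : PowerSeries ℤ_[p]) (α : ℤ_[p])
    (h0 : PadicInt.toZMod (coeff (R := ℤ_[p]) 0 f) = 0)
    (h1 : (1 : ZMod p) + PadicInt.toZMod α * PadicInt.toZMod (coeff (R := ℤ_[p]) 1 f) ≠ 0) :
    Tvar p ∈ Ialpha p f α := by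
  set fb : (ZMod p)⟦X⟧ := PowerSeries.map PadicInt.toZMod f with hfbdef
  have hfb0 : constantCoeff (R := ZMod p) fb = 0 := by
    rw [← coeff_zero_eq_constantCoeff_apply, hfbdef, coeff_map]; exact h0
  set Hb : PowerSeries (PowerSeries (ZMod p)) :=
    (PowerSeries.mk fun i => C (PadicInt.toZMod (Ring.choose α i)))
      * C (1 + PowerSeries.X) - 1 with hHbdef
  have hb0 : coeff 0 Hb = PowerSeries.X := by
    rw [hHbdef, map_sub, coeff_mul_C, coeff_mk, Ring.choose_zero_right, map_one, map_one,
      one_mul, coeff_zero_one]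
    ring
  have hb1 : coeff 1 Hb = C (PadicInt.toZMod α) * (1 + PowerSeries.X) := by
    rw [hHbdef, map_sub, coeff_mul_C, coeff_mk, Ring.choose_one_right, coeff_one,
      if_neg one_ne_zero, sub_zero]
  have hg0 : coeff 0 (ev fb Hb) = 0 := by
    rw [ev, coeff_mk, Finset.sum_range_one, pow_zero, mul_one, hb0]
    simp
  have hXfb : coeff (R := ZMod p) 1 (PowerSeries.X * fb) = coeff 0 fb := coeff_succ_X_mul 0 fb
  have hg1 : coeff 1 (ev fb Hb) = 1 + PadicInt.toZMod α * PadicInt.toZMod (coeff (R := ℤ_[p]) 1 f) := by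
    rw [ev, coeff_mk, Finset.sum_range_succ, Finset.sum_range_one, pow_zero, mul_one, hb0,
      pow_one, hb1, mul_assoc, coeff_C_mul, add_mul, one_mul, map_add, hXfb,
      ← coeff_zero_eq_constantCoeff_apply] at *
    rw [hfb0, add_zero, hfbdef, coeff_map]
    simp
  obtain ⟨v, hv⟩ := X_dvd_iff.mpr
    (show constantCoeff (R := ZMod p) (ev fb Hb) = 0 by
      rw [← coeff_zero_eq_constantCoeff_apply]; exact hg0)
  have hv0 : constantCoeff (R := ZMod p) v
      = 1 + PadicInt.toZMod α * PadicInt.toZMod (coeff (R := ℤ_[p]) 1 f) := by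
    rw [← coeff_zero_eq_constantCoeff_apply, ← hg1, hv]
    exact (coeff_succ_X_mul 0 v).symm
  have hvu : IsUnit v := isUnit_iff_constantCoeff.mpr (by rw [hv0]; exact isUnit_iff_ne_zero.mpr h1)
  obtain ⟨u, hu⟩ := hvu
  have hXg : ((u⁻¹ : ((ZMod p)⟦X⟧)ˣ) : (ZMod p)⟦X⟧) * ev fb Hb = PowerSeries.X := by
    rw [hv, ← hu, mul_comm (PowerSeries.X) ((u : (ZMod p)⟦X⟧)), ← mul_assoc, Units.inv_mul,
      one_mul]
  set Q : PowerSeries (PowerSeries (ZMod p)) :=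
    PowerSeries.mk fun j => PowerSeries.mk fun n =>
      ∑ i ∈ range (n+1), coeff (R := ZMod p) n (coeff (i+j+1) Hb * fb ^ i) with hQdef
  have hkey : Hb - C (ev fb Hb) = (PowerSeries.X - C fb) * Q := key_decomp hfb0 Hb
  obtain ⟨W, hW⟩ := rr_surjective p (C ((u⁻¹ : ((ZMod p)⟦X⟧)ˣ) : (ZMod p)⟦X⟧))
  obtain ⟨V, hV⟩ := rr_surjective p Q
  set E : Lambda p := W * (onePlusSPow p α * (1 + Tvar p) - 1)
      - (PowerSeries.X - PowerSeries.C (R := PowerSeries ℤ_[p]) f) * (W * V) with hEdef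
  have hrrE : rr p E = rr p (Tvar p) := by
    rw [hEdef, map_sub, map_mul, map_mul, map_mul, hW, hV, rr_gen1, rr_gen2, ← hHbdef, rr_Tvar]
    have e2 : Hb - (PowerSeries.X - C fb) * Q = C (ev fb Hb) := by linear_combination hkey
    have e : (C ((u⁻¹ : ((ZMod p)⟦X⟧)ˣ) : (ZMod p)⟦X⟧)) * Hb
        - (PowerSeries.X - C fb) * ((C ((u⁻¹ : ((ZMod p)⟦X⟧)ˣ) : (ZMod p)⟦X⟧)) * Q)
        = (C ((u⁻¹ : ((ZMod p)⟦X⟧)ˣ) : (ZMod p)⟦X⟧)) * (Hb - (PowerSeries.X - C fb) * Q) := by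
      ring
    rw [e, e2, ← map_mul, hXg]
  have hTE : Tvar p - E ∈ Ideal.span {(p : Lambda p)} :=
    mem_span_p_of_rr_eq_zero p (by rw [map_sub, hrrE, sub_self])
  have hE : E ∈ Ialpha p f α := by
    rw [hEdef]
    exact sub_mem (Ideal.mul_mem_left _ W (gen1_mem p f α))
      (Ideal.mul_mem_right _ _ (gen2_mem p f α))
  have hsum := add_mem (span_p_le p f α hTE) hE
  simpa using hsum

lemma X_mem (f : PowerSeries ℤ_[p]) (α : ℤ_[p])
    (h0 : PadicInt.toZMod (coeff (R := ℤ_[p]) 0 f) = 0)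
    (hT : Tvar p ∈ Ialpha p f α) : (PowerSeries.X : Lambda p) ∈ Ialpha p f α := by
  obtain ⟨z, hz⟩ := p_dvd_of_toZMod_eq_zero p h0
  obtain ⟨d, hd⟩ := X_dvd_iff.mpr
    (show constantCoeff (R := ℤ_[p]) (f - C (coeff (R := ℤ_[p]) 0 f)) = 0 by
      rw [map_sub, constantCoeff_C, ← coeff_zero_eq_constantCoeff_apply, sub_self])
  have E2 : C (R := PowerSeries ℤ_[p]) f - C (C ((p : ℤ_[p]) * z)) = Tvar p * C d := by
    rw [Tvar, ← map_mul, ← map_sub]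
    exact congrArg _ (by rw [← hz]; exact hd)
  have E3 : (C (R := PowerSeries ℤ_[p])) (C ((p : ℤ_[p]) * z)) = (p : Lambda p) * C (C z) := by
    rw [natCast_Lambda, ← map_mul, ← map_mul]
  have hX : (PowerSeries.X : Lambda p)
      = (PowerSeries.X - C f) + ((p : Lambda p) * C (C z) + Tvar p * C d) := by
    linear_combination E2 + E3
  rw [hX]
  exact add_mem (gen2_mem p f α)
    (add_mem (Ideal.mul_mem_right _ _ (p_mem_Ialpha p f α)) (Ideal.mul_mem_right _ _ hT))

lemma spanning (f : PowerSeries ℤ_[p]) (α : ℤ_[p])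
    (hT : Tvar p ∈ Ialpha p f α) (hX : (PowerSeries.X : Lambda p) ∈ Ialpha p f α)
    (F : Lambda p) : ∃ n : ℕ, F - (n : Lambda p) ∈ Ialpha p f α := by
  set F0 : PowerSeries ℤ_[p] := coeff 0 F with hF0def
  set a : ℤ_[p] := coeff (R := ℤ_[p]) 0 F0 with hadef
  refine ⟨(PadicInt.toZMod a).val, ?_⟩
  obtain ⟨d1, hd1⟩ := X_dvd_iff.mpr
    (show constantCoeff (R := PowerSeries ℤ_[p]) (F - C F0) = 0 by
      rw [map_sub, constantCoeff_C, ← coeff_zero_eq_constantCoeff_apply, sub_self])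
  obtain ⟨d2, hd2⟩ := X_dvd_iff.mpr
    (show constantCoeff (R := ℤ_[p]) (F0 - C a) = 0 by
      rw [map_sub, constantCoeff_C, ← coeff_zero_eq_constantCoeff_apply, sub_self])
  obtain ⟨z, hz⟩ := p_dvd_of_toZMod_eq_zero p
    (show PadicInt.toZMod (a - (((PadicInt.toZMod a).val : ℕ) : ℤ_[p])) = 0 by
      rw [map_sub, map_natCast]
      rw [ZMod.natCast_rightInverse (PadicInt.toZMod a), sub_self])
  have E2 : C (R := PowerSeries ℤ_[p]) F0 - C (C a) = Tvar p * C d2 := by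
    rw [Tvar, ← map_mul, ← map_sub]
    exact congrArg _ hd2
  have E3 : (C (R := PowerSeries ℤ_[p])) (C a) - ((((PadicInt.toZMod a).val : ℕ)) : Lambda p)
      = (p : Lambda p) * C (C z) := by
    rw [natCast_Lambda p ((PadicInt.toZMod a).val), natCast_Lambda p p, ← map_mul, ← map_mul,
      ← map_sub, ← map_sub]
    exact congrArg _ (congrArg _ hz)
  have key : F - ((((PadicInt.toZMod a).val : ℕ)) : Lambda p)
      = PowerSeries.X * d1 + Tvar p * C d2 + (p : Lambda p) * C (C z) := by
    linear_combination hd1 + E2 + E3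
  rw [key]
  exact add_mem (add_mem (Ideal.mul_mem_right _ _ hX) (Ideal.mul_mem_right _ _ hT))
    (Ideal.mul_mem_right _ _ (p_mem_Ialpha p f α))

lemma Ialpha_eq_top (f : PowerSeries ℤ_[p]) (α : ℤ_[p])
    (h0 : PadicInt.toZMod (coeff (R := ℤ_[p]) 0 f) ≠ 0) : Ialpha p f α = ⊤ := by
  apply Ideal.eq_top_of_isUnit_mem _ (gen2_mem p f α)
  rw [isUnit_iff_constantCoeff]
  have hc : constantCoeff (R := PowerSeries ℤ_[p]) (PowerSeries.X - C f) = -f := by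
    rw [map_sub, constantCoeff_X, constantCoeff_C, zero_sub]
  rw [hc, IsUnit.neg_iff, isUnit_iff_constantCoeff, PadicInt.isUnit_iff]
  rcases lt_or_eq_of_le (PadicInt.norm_le_one (constantCoeff (R := ℤ_[p]) f)) with h | h
  · exfalso
    apply h0
    obtain ⟨y, hy⟩ := (PadicInt.norm_lt_one_iff_dvd _).mp h
    rw [coeff_zero_eq_constantCoeff_apply, hy, map_mul, map_natCast, ZMod.natCast_self, zero_mul]
  · exact h

lemma rank_le_one_any {R : Type} [CommRing R] (I : Ideal R)
    (inst : Module (ZMod p) (R ⧸ I))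
    (hs : ∀ F : R, ∃ n : ℕ, F - (n : R) ∈ I) : Module.rank (ZMod p) (R ⧸ I) ≤ 1 := by
  rw [rank_le_one_iff]
  refine ⟨Ideal.Quotient.mk I 1, fun w => ?_⟩
  obtain ⟨F, rfl⟩ := Ideal.Quotient.mk_surjective w
  obtain ⟨n, hn⟩ := hs F
  refine ⟨(n : ZMod p), ?_⟩
  rw [Nat.cast_smul_eq_nsmul, ← map_nsmul, nsmul_eq_mul, mul_one,
    Ideal.Quotient.mk_eq_mk_iff_sub_mem]
  simpa using I.neg_mem hn

lemma fpDim_le_one {R : Type} [CommRing R] (I : Ideal R) (hpI : (p : R) ∈ I)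
    (hs : ∀ F : R, ∃ n : ℕ, F - (n : R) ∈ I) : fpDim p I hpI ≤ 1 :=
  rank_le_one_any p I _ hs

end P

/-- Lemma `powerseries dimension`: for an odd prime `p`, a power series
`f(T) ∈ ℤ_p[[T]]` and `α ∈ ℤ_p`, one has `dim_{𝔽_p} ℤ_p[[S,T]]/I_α(f) ≤ 1` or
`dim_{𝔽_p} ℤ_p[[S,T]]/I_{−α}(f) ≤ 1`. -/
theorem powerseries_dimension (p : ℕ) [Fact p.Prime] (hp : Odd p)
    (f : PowerSeries ℤ_[p]) (α : ℤ_[p]) :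
    fpDim p (Ialpha p f α) (p_mem_Ialpha p f α) ≤ 1 ∨
    fpDim p (Ialpha p f (-α)) (p_mem_Ialpha p f (-α)) ≤ 1 := by
  by_cases h0 : PadicInt.toZMod (coeff (R := ℤ_[p]) 0 f) = 0
  · by_cases h1 : (1 : ZMod p) + PadicInt.toZMod α * PadicInt.toZMod (coeff (R := ℤ_[p]) 1 f) = 0
    · right
      have h1' : (1 : ZMod p) + PadicInt.toZMod (-α) * PadicInt.toZMod (coeff (R := ℤ_[p]) 1 f) ≠ 0 := by
        rw [map_neg, neg_mul]
        intro hcon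
        have h2 : (2 : ZMod p) = 0 := by linear_combination h1 + hcon
        have hpd : (p : ℕ) ∣ 2 :=
          (CharP.cast_eq_zero_iff (ZMod p) p 2).mp (by exact_mod_cast h2)
        rcases (Nat.prime_two.eq_one_or_self_of_dvd p hpd) with h | h
        · exact absurd h (Fact.out (p := p.Prime)).ne_one
        · rw [h] at hp
          exact (by norm_num : ¬ Odd 2) hp
      have hT := Tvar_mem p f (-α) h0 h1'
      exact fpDim_le_one p _ _ (spanning p f (-α) hT (X_mem p f (-α) h0 hT))
    · left
      have hT := Tvar_mem p f α h0 h1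
      exact fpDim_le_one p _ _ (spanning p f α hT (X_mem p f α h0 hT))
  · left
    apply fpDim_le_one
    intro F
    refine ⟨0, ?_⟩
    rw [Ialpha_eq_top p f α h0]
    trivial
end

section
/- Let p be a prime, f(T) ∈ ℤ_p[[T]] a power series all of whose coefficients lie in pℤ_p (i.e. f ∈ p·ℤ_p[[T]]), and α ∈ ℤ_p. Then dim_{𝔽_p} ℤ_p[[S,T]]/I_α(f) = 1. (The case μ(f) > 0 in the proof of the key lemma.) -/
open PowerSeries

noncomputable def phiAux (p : ℕ) [Fact p.Prime] : Lambda p →+* ZMod p :=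
  (PadicInt.toZMod).comp ((constantCoeff (R := ℤ_[p])).comp (constantCoeff (R := PowerSeries ℤ_[p])))

lemma ker_phiAux (p : ℕ) [Fact p.Prime] : RingHom.ker (phiAux p) =
    Ideal.span {(PowerSeries.X : Lambda p),
      PowerSeries.C (R := PowerSeries ℤ_[p]) PowerSeries.X, (p : Lambda p)} := by
  ext F
  constructor
  · intro hF
    rw [RingHom.mem_ker] at hF
    set c1 := constantCoeff (R := PowerSeries ℤ_[p]) F with hc1
    set a := constantCoeff (R := ℤ_[p]) c1 with ha
    have haker : a ∈ Ideal.span {(p : ℤ_[p])} := by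
      rw [← PadicInt.maximalIdeal_eq_span_p, ← PadicInt.ker_toZMod, RingHom.mem_ker]
      exact hF
    obtain ⟨b, hb⟩ := Ideal.mem_span_singleton.mp haker
    obtain ⟨q1, hq1⟩ : (X : Lambda p) ∣ F - C c1 := by
      rw [X_dvd_iff]; simp [hc1]
    obtain ⟨q2, hq2⟩ : (X : PowerSeries ℤ_[p]) ∣ c1 - PowerSeries.C a := by
      rw [X_dvd_iff]; simp [ha]
    have hdecomp : F = X * q1 + C X * (C q2) + (p : Lambda p) * C (C b) := by
      have hc : c1 = X * q2 + PowerSeries.C a := by linear_combination hq2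
      have h2 : F = X * q1 + C c1 := by rw [← hq1]; ring
      rw [h2, hc, hb]
      simp only [map_add, map_mul, map_natCast]
      ring
    rw [hdecomp]
    refine Ideal.add_mem _ (Ideal.add_mem _ ?_ ?_) ?_
    · exact Ideal.mul_mem_right _ _ (Ideal.subset_span (by simp))
    · exact Ideal.mul_mem_right _ _ (Ideal.subset_span (by simp))
    · exact Ideal.mul_mem_right _ _ (Ideal.subset_span (by simp))
  · intro hF
    refine Ideal.span_le.mpr ?_ hF
    rintro x hx
    simp only [Set.mem_insert_iff, Set.mem_singleton_iff] at hx
    rcases hx with rfl | rfl | rfl <;>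
      simp [phiAux, RingHom.mem_ker, SetLike.mem_coe]

lemma Ialpha_eq_span (p : ℕ) [Fact p.Prime] (f : PowerSeries ℤ_[p])
    (hf : f ∈ Ideal.span {(p : PowerSeries ℤ_[p])}) (α : ℤ_[p]) :
    Ialpha p f α = Ideal.span {(PowerSeries.X : Lambda p),
      PowerSeries.C (R := PowerSeries ℤ_[p]) PowerSeries.X, (p : Lambda p)} := by
  obtain ⟨g', hg'⟩ := Ideal.mem_span_singleton.mp hf
  obtain ⟨h, hh⟩ : (X : Lambda p) ∣ onePlusSPow p α - 1 := by
    rw [X_dvd_iff]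
    simp [onePlusSPow, PowerSeries.constantCoeff_mk]
  set M : Ideal (Lambda p) := Ideal.span {(PowerSeries.X : Lambda p),
      PowerSeries.C (R := PowerSeries ℤ_[p]) PowerSeries.X, (p : Lambda p)} with hM
  have hXM : (X : Lambda p) ∈ M := Ideal.subset_span (by simp)
  have hTM : (PowerSeries.C (R := PowerSeries ℤ_[p]) PowerSeries.X : Lambda p) ∈ M := Ideal.subset_span (by simp)
  have hpM : ((p : ℕ) : Lambda p) ∈ M := Ideal.subset_span (by simp)
  apply le_antisymm
  · rw [Ialpha, Ideal.span_le]
    rintro x hx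
    simp only [Set.mem_insert_iff, Set.mem_singleton_iff] at hx
    rcases hx with rfl | rfl | rfl
    · have : onePlusSPow p α * (1 + Tvar p) - 1
          = X * h * (1 + Tvar p) + Tvar p := by
        rw [← hh]; ring
      rw [this]
      exact Ideal.add_mem _ (Ideal.mul_mem_right _ _ (Ideal.mul_mem_right _ _ hXM)) hTM
    · have : (X : Lambda p) - C f = X - (p : Lambda p) * C g' := by
        rw [hg']; simp only [map_mul, map_natCast]
      rw [this]
      exact Ideal.sub_mem _ hXM (Ideal.mul_mem_right _ _ hpM)
    · exact hpM
  · have hpI : ((p : ℕ) : Lambda p) ∈ Ialpha p f α := p_mem_Ialpha p f α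
    have hgI : onePlusSPow p α * (1 + Tvar p) - 1 ∈ Ialpha p f α :=
      Ideal.subset_span (by simp)
    have hXI : (X : Lambda p) ∈ Ialpha p f α := by
      have hXf : (X : Lambda p) - C f ∈ Ialpha p f α := Ideal.subset_span (by simp)
      have hCf : (C f : Lambda p) ∈ Ialpha p f α := by
        have : (C f : Lambda p) = (p : Lambda p) * C g' := by
          rw [hg']; simp only [map_mul, map_natCast]
        rw [this]
        exact Ideal.mul_mem_right _ _ hpI
      have := Ideal.add_mem _ hXf hCf
      simpa using this
    have hTI : (PowerSeries.C (R := PowerSeries ℤ_[p]) PowerSeries.X : Lambda p) ∈ Ialpha p f α := by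
      have : (PowerSeries.C (R := PowerSeries ℤ_[p]) PowerSeries.X : Lambda p)
          = (onePlusSPow p α * (1 + Tvar p) - 1) - X * h * (1 + Tvar p) := by
        rw [← hh, Tvar]; ring
      rw [this]
      exact Ideal.sub_mem _ hgI (Ideal.mul_mem_right _ _ (Ideal.mul_mem_right _ _ hXI))
    rw [Ideal.span_le]
    rintro x hx
    simp only [Set.mem_insert_iff, Set.mem_singleton_iff] at hx
    rcases hx with rfl | rfl | rfl
    · exact hXI
    · exact hTI
    · exact hpI

lemma fpDim_eq_one_of_ringEquiv (p : ℕ) [Fact p.Prime] {R : Type} [CommRing R]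
    (I : Ideal R) (h : (p : R) ∈ I) (e : (R ⧸ I) ≃+* ZMod p) :
    fpDim p I h = 1 := by
  unfold fpDim
  letI : Module (ZMod p) (R ⧸ I) := AddCommGroup.zmodModule (fun x => by
    obtain ⟨y, rfl⟩ := Ideal.Quotient.mk_surjective x
    rw [← map_nsmul, nsmul_eq_mul]
    exact Ideal.Quotient.eq_zero_iff_mem.mpr (I.mul_mem_right y h))
  let e' : (R ⧸ I) ≃ₗ[ZMod p] ZMod p :=
    { e.toAddEquiv with map_smul' := fun c x => ZMod.map_smul e.toAddMonoidHom c x }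
  rw [e'.rank_eq, Module.rank_self]

/-- the case `μ(f) > 0`: if all coefficients of `f` lie in `pℤ_p`, i.e.
`f ∈ p·ℤ_p[[T]]`, then `dim_{𝔽_p} ℤ_p[[S,T]]/I_α(f) = 1`. -/
theorem fpDim_Ialpha_eq_one_of_mem_span_p (p : ℕ) [Fact p.Prime]
    (f : PowerSeries ℤ_[p]) (hf : f ∈ Ideal.span {(p : PowerSeries ℤ_[p])}) (α : ℤ_[p]) :
    fpDim p (Ialpha p f α) (p_mem_Ialpha p f α) = 1 := by
  refine fpDim_eq_one_of_ringEquiv p _ _ ?_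
  have hker : Ialpha p f α = RingHom.ker (phiAux p) := by
    rw [ker_phiAux, Ialpha_eq_span p f hf α]
  exact (Ideal.quotEquivOfEq hker).trans
    (RingHom.quotientKerEquivOfSurjective (ZMod.ringHom_surjective (phiAux p)))
end

section
/- Let p be a prime, g ∈ 𝔽_p[[T]] a power series with zero constant coefficient, α ∈ ℤ_p, and u ∈ ℕ. Then (1+g)^{p^u·α} = (1 + g^{p^u})^α in 𝔽_p[[T]]. (The Frobenius manipulation used in the proof of the key lemma to reduce to the case where the exponent is a p-adic unit.) -/
open PowerSeries

/-- For `g ∈ 𝔽_p[[T]]` (intended to have zero constant coefficient),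
`(1+g)^α := Σ_{i≥0} c(α,i)·g^i ∈ 𝔽_p[[T]]`, where `c(α,i) ∈ 𝔽_p` is the mod-`p` reduction of the
`p`-adic binomial coefficient `C(α,i) = Ring.choose α i ∈ ℤ_p`.  Since `g^i` has order `≥ i`
when `g` has zero constant coefficient, the `n`-th coefficient of the sum is the finite sum
over `i ≤ n`. -/
noncomputable def onePlusPow (p : ℕ) [Fact p.Prime] (g : PowerSeries (ZMod p)) (α : ℤ_[p]) :
    PowerSeries (ZMod p) :=
  PowerSeries.mk fun n => ∑ i ∈ Finset.range (n + 1),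
    PadicInt.toZMod (Ring.choose α i) * PowerSeries.coeff n (g ^ i)

/-- `toZMod : ℤ_[p] → ZMod p` is continuous (the target being discrete). -/
lemma continuous_toZMod (p : ℕ) [Fact p.Prime] :
    Continuous (PadicInt.toZMod : ℤ_[p] → ZMod p) := by
  rw [continuous_iff_continuousAt]
  intro a
  have h : (fun x : ℤ_[p] => PadicInt.toZMod x) =ᶠ[nhds a]
      (fun _ => PadicInt.toZMod a) := by
    filter_upwards [Metric.ball_mem_nhds a one_pos] with x hx
    have hxa : x - a ∈ IsLocalRing.maximalIdeal ℤ_[p] := by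
      rw [IsLocalRing.mem_maximalIdeal, PadicInt.mem_nonunits]
      simpa [dist_eq_norm] using hx
    have : x - a ∈ RingHom.ker (PadicInt.toZMod : ℤ_[p] →+* ZMod p) := by
      rw [PadicInt.ker_toZMod]; exact hxa
    rw [RingHom.mem_ker, map_sub, sub_eq_zero] at this
    exact this
  exact ContinuousAt.congr (continuousAt_const) h.symm

lemma coeff_pow_eq_zero (p : ℕ) [Fact p.Prime] {g : PowerSeries (ZMod p)}
    (hg : PowerSeries.constantCoeff g = 0) {m i : ℕ} (h : m < i) :
    PowerSeries.coeff m (g ^ i) = 0 := by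
  have hdvd : (X : PowerSeries (ZMod p)) ^ i ∣ g ^ i :=
    pow_dvd_pow_of_dvd (PowerSeries.X_dvd_iff.mpr hg) i
  exact PowerSeries.X_pow_dvd_iff.mp hdvd m h

lemma onePlusPow_natCast (p : ℕ) [Fact p.Prime] (g : PowerSeries (ZMod p))
    (hg : PowerSeries.constantCoeff g = 0) (n : ℕ) :
    onePlusPow p g (n : ℤ_[p]) = (1 + g) ^ n := by
  ext m
  rw [onePlusPow, coeff_mk]
  set f : ℕ → ZMod p := fun i => (n.choose i : ZMod p) * PowerSeries.coeff m (g ^ i)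
    with hf
  have hL : ∑ i ∈ Finset.range (m + 1),
      PadicInt.toZMod (Ring.choose (n : ℤ_[p]) i) * PowerSeries.coeff m (g ^ i)
      = ∑ i ∈ Finset.range (m + 1), f i := by
    refine Finset.sum_congr rfl fun i _ => ?_
    rw [hf]
    congr 1
    rw [Ring.choose_natCast]
    simp
  have hR : PowerSeries.coeff m ((1 + g) ^ n)
      = ∑ i ∈ Finset.range (n + 1), f i := by
    rw [add_comm 1 g, add_pow]
    simp only [map_sum, one_pow, mul_one, map_mul, hf]
    refine Finset.sum_congr rfl fun i _ => ?_
    rw [show ((n.choose i : ℕ) : PowerSeries (ZMod p))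
        = PowerSeries.C ((n.choose i : ℕ) : ZMod p) by simp,
      PowerSeries.coeff_mul_C, mul_comm]
  rw [hL, hR]
  have h1 : ∑ i ∈ Finset.range (m + 1), f i
      = ∑ i ∈ Finset.range (max (m + 1) (n + 1)), f i := by
    refine Finset.sum_subset (Finset.range_subset_range.mpr (le_max_left _ _)) ?_
    intro i _ hi
    rw [Finset.mem_range, not_lt] at hi
    rw [hf]
    simp [coeff_pow_eq_zero p hg (by omega : m < i)]
  have h2 : ∑ i ∈ Finset.range (n + 1), f i
      = ∑ i ∈ Finset.range (max (m + 1) (n + 1)), f i := by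
    refine Finset.sum_subset (Finset.range_subset_range.mpr (le_max_right _ _)) ?_
    intro i _ hi
    rw [Finset.mem_range, not_lt] at hi
    rw [hf]
    simp [Nat.choose_eq_zero_of_lt (by omega : n < i)]
  rw [h1, h2]

/-- Frobenius manipulation: for `g ∈ 𝔽_p[[T]]` with zero constant coefficient,
`α ∈ ℤ_p` and `u ∈ ℕ`, one has `(1+g)^{p^u·α} = (1+g^{p^u})^α` in `𝔽_p[[T]]`. -/
theorem onePlusPow_pow_mul (p : ℕ) [Fact p.Prime] (g : PowerSeries (ZMod p))
    (hg : PowerSeries.constantCoeff g = 0) (α : ℤ_[p]) (u : ℕ) :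
    onePlusPow p g ((p : ℤ_[p]) ^ u * α) = onePlusPow p (g ^ p ^ u) α := by
  have hgp : PowerSeries.constantCoeff (g ^ p ^ u) = 0 := by
    rw [map_pow, hg, zero_pow (pow_ne_zero u (Fact.out : p.Prime).ne_zero)]
  have hcharP : CharP (PowerSeries (ZMod p)) p :=
    ((PowerSeries.C (R := ZMod p)).charP_iff PowerSeries.C_injective p).mp inferInstance
  have hkey : ∀ m : ℕ, onePlusPow p g ((p : ℤ_[p]) ^ u * (m : ℤ_[p]))
      = onePlusPow p (g ^ p ^ u) (m : ℤ_[p]) := by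
    intro m
    have hcast : (p : ℤ_[p]) ^ u * (m : ℤ_[p]) = ((p ^ u * m : ℕ) : ℤ_[p]) := by push_cast; ring
    rw [hcast, onePlusPow_natCast p g hg, onePlusPow_natCast p (g ^ p ^ u) hgp]
    rw [pow_mul]
    congr 1
    have := add_pow_char_pow (R := PowerSeries (ZMod p)) (p := p) (n := u)
      (x := (1 : PowerSeries (ZMod p))) (y := g)
    rw [this, one_pow]
  ext n
  rw [onePlusPow, onePlusPow, coeff_mk, coeff_mk]
  have hF : Continuous (fun β : ℤ_[p] => ∑ i ∈ Finset.range (n + 1),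
      PadicInt.toZMod (Ring.choose ((p : ℤ_[p]) ^ u * β) i)
        * PowerSeries.coeff n (g ^ i)) := by
    refine continuous_finset_sum _ fun i _ => Continuous.mul ?_ continuous_const
    exact (continuous_toZMod p).comp
      ((PadicInt.continuous_choose i).comp (continuous_const.mul continuous_id))
  have hG : Continuous (fun β : ℤ_[p] => ∑ i ∈ Finset.range (n + 1),
      PadicInt.toZMod (Ring.choose β i)
        * PowerSeries.coeff n ((g ^ p ^ u) ^ i)) := by
    refine continuous_finset_sum _ fun i _ => Continuous.mul ?_ continuous_const
    exact (continuous_toZMod p).comp (PadicInt.continuous_choose i)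
  refine congrFun (PadicInt.denseRange_natCast.equalizer hF hG ?_) α
  · funext m
    have := hkey m
    rw [onePlusPow, onePlusPow] at this
    have h2 := congrArg (PowerSeries.coeff n) this
    rw [coeff_mk, coeff_mk] at h2
    exact h2
end

section
/- Let p be a prime and regard ℤ_p[[T]] as a subring of Λ := ℤ_p[[S,T]] in the natural way. Let X be a Λ-module which is cyclic over ℤ_p[[T]], i.e. X = ℤ_p[[T]]·x for some x ∈ X. Then there exists a power series f(T) ∈ ℤ_p[[T]] such that (S − f(T))·X = 0, i.e. S − f(T) lies in the annihilator ideal Ann_Λ(X). (The annihilator construction, following Bloom and Fujii, used in the proof of the CM-field theorem.) -/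
open PowerSeries

/-- the annihilator construction of Bloom and Fujii: if `X` is a module over
`Λ = ℤ_p[[S,T]]` which is cyclic over the subring `ℤ_p[[T]]`, say `X = ℤ_p[[T]]·x`, then there is
a power series `f(T) ∈ ℤ_p[[T]]` with `(S − f(T))·X = 0`, i.e. `S − f(T) ∈ Ann_Λ(X)`. -/
theorem exists_S_sub_f_annihilates (p : ℕ) [Fact p.Prime] (X : Type) [AddCommGroup X]
    [Module (Lambda p) X] (x : X)
    (hx : ∀ y : X, ∃ c : PowerSeries ℤ_[p],
      y = (PowerSeries.C (R := PowerSeries ℤ_[p]) c : Lambda p) • x) :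
    ∃ f : PowerSeries ℤ_[p],
      ∀ y : X, ((PowerSeries.X : Lambda p) - PowerSeries.C (R := PowerSeries ℤ_[p]) f) • y = 0 := by
  obtain ⟨f, hf⟩ := hx ((PowerSeries.X : Lambda p) • x)
  refine ⟨f, fun y => ?_⟩
  obtain ⟨c, rfl⟩ := hx y
  rw [smul_smul, mul_comm, ← smul_smul, sub_smul, hf, sub_self, smul_zero]
end

section
/- Let p be an odd prime, Λ := ℤ_p[[S,T]], and X a Λ-module which is cyclic over the subring ℤ_p[[T]], i.e. X = ℤ_p[[T]]·x for some x ∈ X. Then for every α ∈ ℤ_p, at least one of the 𝔽_p-vector spaces X/(w_α·X + p·X) and X/(w_{−α}·X + p·X) has dimension at most 1, where w_α := (1+S)^α(1+T) − 1 ∈ Λ; equivalently, min(rank_p X/w_αX, rank_p X/w_{−α}X) ≤ 1. (This is the algebraic content of the paper's Theorem on coinvariants: identifying ℤ_p[[Gal(K/k)]] ≅ ℤ_p[[S,T]] via topological generators σ ↔ 1+S of Gal(K/k^an) and τ ↔ 1+T of Gal(K/k^cyc), the coinvariants X_{Gal(K/k_∞)} for k_∞ the fixed field of σ^ατ equal X/w_αX.)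 -/
open PowerSeries

/-- The submodule `w·M + p·M` of a module `M` over `Λ = ℤ_p[[S,T]]`. -/
noncomputable def wpSubmodule (p : ℕ) [Fact p.Prime] (M : Type) [AddCommGroup M] [Module (Lambda p) M]
    (w : Lambda p) : Submodule (Lambda p) M :=
  Ideal.span {w, (p : Lambda p)} • (⊤ : Submodule (Lambda p) M)

/-- `rank_p M/w·M := dim_{𝔽_p} M/(w·M + p·M)` for a module `M` over `Λ = ℤ_p[[S,T]]` and
`w ∈ Λ`; the quotient is killed by `p`, hence naturally an `𝔽_p`-vector space. -/
noncomputable def fpRankQuot (p : ℕ) [Fact p.Prime] (M : Type) [AddCommGroup M]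
    [Module (Lambda p) M] (w : Lambda p) : Cardinal :=
  letI : Module (ZMod p) (M ⧸ wpSubmodule p M w) := AddCommGroup.zmodModule (fun y => by
    obtain ⟨z, rfl⟩ := Submodule.Quotient.mk_surjective _ y
    rw [← Nat.cast_smul_eq_nsmul (Lambda p), ← Submodule.Quotient.mk_smul,
      Submodule.Quotient.mk_eq_zero]
    exact Submodule.smul_mem_smul (Ideal.subset_span (by simp)) Submodule.mem_top)
  Module.rank (ZMod p) (M ⧸ wpSubmodule p M w)

section MyAux

variable (p : ℕ) [Fact p.Prime]

lemma my_padic_not_isUnit_iff (z : ℤ_[p]) : ¬IsUnit z ↔ (p : ℤ_[p]) ∣ z := by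
  rw [PadicInt.not_isUnit_iff, PadicInt.norm_lt_one_iff_dvd]

lemma my_ps_split {A : Type*} [CommRing A] (F : PowerSeries A) :
    F = PowerSeries.C (R := A) (PowerSeries.coeff (R := A) 0 F)
      + PowerSeries.X * PowerSeries.mk (fun n => PowerSeries.coeff (R := A) (n + 1) F) := by
  ext n
  cases n with
  | zero => simp
  | succ n => simp [PowerSeries.coeff_succ_X_mul]

lemma my_onePlusSPow_split (α : ℤ_[p]) : ∃ Rα : Lambda p,
    onePlusSPow p α = 1 + PowerSeries.C (PowerSeries.C (R := ℤ_[p]) α) * PowerSeries.X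
      + PowerSeries.X ^ 2 * Rα := by
  have h : (PowerSeries.X : Lambda p) ^ 2 ∣
      onePlusSPow p α - 1 - PowerSeries.C (PowerSeries.C (R := ℤ_[p]) α) * PowerSeries.X := by
    rw [PowerSeries.X_pow_dvd_iff]
    intro m hm
    interval_cases m <;>
      simp [onePlusSPow, PowerSeries.coeff_one, Ring.choose_zero_right, Ring.choose_one_right]
  obtain ⟨Rα, hR⟩ := h
  exact ⟨Rα, by linear_combination hR⟩

lemma my_Tvar_mem_of (f : PowerSeries ℤ_[p]) (α : ℤ_[p])
    (hd : (p : ℤ_[p]) ∣ PowerSeries.coeff (R := ℤ_[p]) 0 f)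
    (hu : ¬ (p : ℤ_[p]) ∣ (1 + α * PowerSeries.coeff (R := ℤ_[p]) 1 f)) :
    Tvar p ∈ Ialpha p f α := by
  obtain ⟨d, hdd⟩ := hd
  obtain ⟨Rα, hR⟩ := my_onePlusSPow_split p α
  let CΛ : PowerSeries ℤ_[p] →+* Lambda p := PowerSeries.C (R := PowerSeries ℤ_[p])
  let f₁ : PowerSeries ℤ_[p] := PowerSeries.mk fun n => PowerSeries.coeff (R := ℤ_[p]) (n + 1) f
  have hf : CΛ f = (p : Lambda p) * CΛ (PowerSeries.C (R := ℤ_[p]) d) + Tvar p * CΛ f₁ := by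
    conv_lhs => rw [my_ps_split f]
    rw [hdd]
    simp only [map_add, map_mul, map_natCast]
    rfl
  let A : Lambda p := CΛ (PowerSeries.C (R := ℤ_[p]) α)
  let M : Lambda p := CΛ f₁
  let D : Lambda p := CΛ (PowerSeries.C (R := ℤ_[p]) d)
  let t : Lambda p := Tvar p
  let s : Lambda p := (PowerSeries.X : Lambda p)
  let U : Lambda p := 1 + A * M * (1 + t) + t * M ^ 2 * Rα * (1 + t)
  let V : Lambda p := A * (1 + t) + Rα * (1 + t) * (s + t * M)
  have key : t * U = (onePlusSPow p α * (1 + t) - 1) * 1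
      + (s - CΛ f) * (-V) + (p : Lambda p) * (-(D * V)) := by
    show (Tvar p) * U = _
    rw [hR, hf]
    show Tvar p * (1 + A * M * (1 + Tvar p) + Tvar p * M ^ 2 * Rα * (1 + Tvar p)) = _
    ring
  have hUnit : IsUnit U := by
    rw [PowerSeries.isUnit_iff_constantCoeff, PowerSeries.isUnit_iff_constantCoeff]
    have hcc : (PowerSeries.constantCoeff (R := ℤ_[p]))
        ((PowerSeries.constantCoeff (R := PowerSeries ℤ_[p])) U)
        = 1 + α * PowerSeries.coeff (R := ℤ_[p]) 1 f := by
      show (PowerSeries.constantCoeff (R := ℤ_[p])) ((PowerSeries.constantCoeff (R := PowerSeries ℤ_[p]))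
        (1 + CΛ (PowerSeries.C (R := ℤ_[p]) α) * CΛ f₁ * (1 + Tvar p)
          + Tvar p * (CΛ f₁) ^ 2 * Rα * (1 + Tvar p))) = _
      simp [CΛ, f₁, Tvar, PowerSeries.coeff_zero_eq_constantCoeff]
    rw [hcc]
    by_contra hcon
    exact hu ((my_padic_not_isUnit_iff p _).mp hcon)
  obtain ⟨u, hu'⟩ := hUnit
  have htU : t * U ∈ Ialpha p f α := by
    rw [key]
    refine add_mem (add_mem ?_ ?_) ?_ <;>
      exact Ideal.mul_mem_right _ _ (Ideal.subset_span (by simp [t, s, CΛ]))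
  have hteq : Tvar p = (t * U) * ↑u⁻¹ := by
    rw [← hu', mul_assoc, u.mul_inv, mul_one]
  rw [hteq]
  exact Ideal.mul_mem_right _ _ htU

lemma my_Tvar_mem_or (hp : Odd p) (f : PowerSeries ℤ_[p]) (α : ℤ_[p]) :
    Tvar p ∈ Ialpha p f α ∨ Tvar p ∈ Ialpha p f (-α) := by
  by_cases hc : (p : ℤ_[p]) ∣ PowerSeries.coeff (R := ℤ_[p]) 0 f
  · by_cases h1 : (p : ℤ_[p]) ∣ (1 + α * PowerSeries.coeff (R := ℤ_[p]) 1 f)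
    · right
      refine my_Tvar_mem_of p f (-α) hc ?_
      intro h2
      have h3 : (p : ℤ_[p]) ∣ 2 := by
        have := dvd_add h1 h2
        have he : (1 + α * PowerSeries.coeff (R := ℤ_[p]) 1 f)
            + (1 + (-α) * PowerSeries.coeff (R := ℤ_[p]) 1 f) = 2 := by ring
        rwa [he] at this
      have h5 : p ∣ 2 := by
        obtain ⟨e, he⟩ := h3
        have h6 : ((2 : ℕ) : ℤ_[p]) = (p : ℤ_[p]) * e := by exact_mod_cast he
        have h7 := congrArg (PadicInt.toZMod (p := p)) h6
        rw [map_natCast, map_mul, map_natCast, ZMod.natCast_self, zero_mul] at h7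
        exact (ZMod.natCast_eq_zero_iff 2 p).mp h7
      have hp2 : p = 2 :=
        ((Nat.prime_dvd_prime_iff_eq (Fact.out) Nat.prime_two).mp h5)
      rw [hp2] at hp
      exact (Nat.not_odd_iff_even.mpr (even_two)) hp
    · left
      exact my_Tvar_mem_of p f α hc h1
  · have hunit : IsUnit ((PowerSeries.X : Lambda p) - PowerSeries.C f) := by
      rw [PowerSeries.isUnit_iff_constantCoeff]
      have : (PowerSeries.constantCoeff (R := PowerSeries ℤ_[p]))
          ((PowerSeries.X : Lambda p) - PowerSeries.C f) = -f := by
        simp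
      rw [this, IsUnit.neg_iff, PowerSeries.isUnit_iff_constantCoeff]
      by_contra hcon
      rw [PowerSeries.coeff_zero_eq_constantCoeff] at hc
      exact hc ((my_padic_not_isUnit_iff p _).mp hcon)
    have htop : Ialpha p f α = ⊤ :=
      Ideal.eq_top_of_isUnit_mem _ (Ideal.subset_span (by simp)) hunit
    left
    rw [htop]
    trivial

lemma my_rank_le_one (Q : Type) [AddCommGroup Q] [inst : Module (ZMod p) Q] (x₀ : Q)
    (h : ∀ v : Q, ∃ n : ℕ, v = n • x₀) : Module.rank (ZMod p) Q ≤ 1 := by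
  refine rank_le_one_iff.mpr ⟨x₀, fun v => ?_⟩
  obtain ⟨n, rfl⟩ := h v
  exact ⟨(n : ZMod p), by rw [Nat.cast_smul_eq_nsmul]⟩

lemma my_fpRankQuot_le_one (M : Type) [AddCommGroup M] [Module (Lambda p) M]
    (w : Lambda p) (x₀ : M)
    (h : ∀ y : M, ∃ n : ℕ, y - n • x₀ ∈ wpSubmodule p M w) :
    fpRankQuot p M w ≤ 1 := by
  unfold fpRankQuot
  have hspan : ∀ v : M ⧸ wpSubmodule p M w, ∃ n : ℕ,
      v = n • Submodule.Quotient.mk x₀ := by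
    intro v
    obtain ⟨y, rfl⟩ := Submodule.Quotient.mk_surjective _ v
    obtain ⟨n, hn⟩ := h y
    refine ⟨n, ?_⟩
    have h1 : (n • Submodule.Quotient.mk x₀ : M ⧸ wpSubmodule p M w)
        = Submodule.Quotient.mk (n • x₀) := (map_nsmul (Submodule.mkQ _) n x₀).symm
    rw [h1, Submodule.Quotient.eq]
    exact hn
  exact my_rank_le_one p (M ⧸ wpSubmodule p M w)
    (inst := AddCommGroup.zmodModule (fun y => by
      obtain ⟨z, rfl⟩ := Submodule.Quotient.mk_surjective _ y
      rw [← Nat.cast_smul_eq_nsmul (Lambda p), ← Submodule.Quotient.mk_smul,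
        Submodule.Quotient.mk_eq_zero]
      exact Submodule.smul_mem_smul (Ideal.subset_span (by simp)) Submodule.mem_top))
    (Submodule.Quotient.mk x₀) hspan

lemma my_rank_aux (X : Type) [AddCommGroup X] [Module (Lambda p) X] (x : X)
    (hx : ∀ y : X, ∃ c : PowerSeries ℤ_[p],
      y = (PowerSeries.C (R := PowerSeries ℤ_[p]) c : Lambda p) • x)
    (f : PowerSeries ℤ_[p])
    (hann : ∀ y : X, ((PowerSeries.X : Lambda p) - PowerSeries.C f) • y = 0)
    (w : Lambda p)
    (hT : Tvar p ∈ Ideal.span {w, PowerSeries.X - PowerSeries.C (R := PowerSeries ℤ_[p]) f,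
      (p : Lambda p)}) :
    fpRankQuot p X w ≤ 1 := by
  set N := wpSubmodule p X w with hN
  have hpN : ∀ z : X, (p : Lambda p) • z ∈ N := fun z =>
    Submodule.smul_mem_smul (Ideal.subset_span (by simp)) Submodule.mem_top
  have hwN : ∀ z : X, w • z ∈ N := fun z =>
    Submodule.smul_mem_smul (Ideal.subset_span (by simp)) Submodule.mem_top
  have hTN : ∀ z : X, Tvar p • z ∈ N := by
    intro z
    refine Submodule.span_induction (p := fun r _ => r • z ∈ N) ?_ ?_ ?_ ?_ hT
    · rintro r (rfl | rfl | rfl)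
      · exact hwN z
      · rw [hann z]; exact N.zero_mem
      · exact hpN z
    · show (0 : Lambda p) • z ∈ N
      rw [zero_smul]; exact N.zero_mem
    · intro r r' _ _ hr hr'
      show (r + r') • z ∈ N
      rw [add_smul]; exact N.add_mem hr hr'
    · intro a r _ hr
      show (a • r) • z ∈ N
      rw [smul_eq_mul, mul_smul]; exact N.smul_mem a hr
  apply my_fpRankQuot_le_one p X w x
  intro y
  obtain ⟨c, rfl⟩ := hx y
  set c₀ : ℤ_[p] := PowerSeries.coeff (R := ℤ_[p]) 0 c with hc₀
  set n : ℕ := (PadicInt.toZMod c₀).val with hn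
  have hker : c₀ - (n : ℤ_[p]) ∈ RingHom.ker (PadicInt.toZMod : ℤ_[p] →+* ZMod p) := by
    rw [RingHom.mem_ker, map_sub, map_natCast, hn, ZMod.natCast_val, ZMod.cast_id, sub_self]
  rw [PadicInt.ker_toZMod, PadicInt.maximalIdeal_eq_span_p, Ideal.mem_span_singleton] at hker
  obtain ⟨e, he⟩ := hker
  refine ⟨n, ?_⟩
  have hns : (n • x : X) = ((n : Lambda p)) • x := (Nat.cast_smul_eq_nsmul (Lambda p) n x).symm
  have hsplit : (PowerSeries.C (R := PowerSeries ℤ_[p]) c : Lambda p) - (n : Lambda p)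
      = (p : Lambda p) * PowerSeries.C (PowerSeries.C (R := ℤ_[p]) e)
        + Tvar p * PowerSeries.C (PowerSeries.mk fun m => PowerSeries.coeff (R := ℤ_[p]) (m + 1) c) := by
    have h1 : (n : Lambda p) = PowerSeries.C (PowerSeries.C (R := ℤ_[p]) (n : ℤ_[p])) := by
      rw [map_natCast, map_natCast]
    rw [h1, ← map_sub]
    conv_lhs => rw [my_ps_split c]
    have h2 : PowerSeries.C (R := ℤ_[p]) c₀ + PowerSeries.X *
          (PowerSeries.mk fun m => PowerSeries.coeff (R := ℤ_[p]) (m + 1) c)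
          - PowerSeries.C (R := ℤ_[p]) (n : ℤ_[p])
        = (p : PowerSeries ℤ_[p]) * PowerSeries.C (R := ℤ_[p]) e + PowerSeries.X *
          (PowerSeries.mk fun m => PowerSeries.coeff (R := ℤ_[p]) (m + 1) c) := by
      have h3 : PowerSeries.C (R := ℤ_[p]) c₀ - PowerSeries.C (R := ℤ_[p]) (n : ℤ_[p])
          = (p : PowerSeries ℤ_[p]) * PowerSeries.C (R := ℤ_[p]) e := by
        rw [← map_sub, he, map_mul, map_natCast]
      linear_combination h3
    rw [h2, map_add, map_mul, map_mul, map_natCast]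
    rfl
  have : (PowerSeries.C (R := PowerSeries ℤ_[p]) c : Lambda p) • x - n • x
      = (p : Lambda p) • (PowerSeries.C (PowerSeries.C (R := ℤ_[p]) e) • x)
        + Tvar p • ((PowerSeries.C (PowerSeries.mk fun m =>
            PowerSeries.coeff (R := ℤ_[p]) (m + 1) c) : Lambda p) • x) := by
    rw [hns, ← sub_smul, hsplit, add_smul, mul_smul, mul_smul]
  rw [this]
  exact N.add_mem (hpN _) (hTN _)

end MyAux

/-- algebraic content of the theorem on coinvariants: for an odd prime `p`
and a `Λ = ℤ_p[[S,T]]`-module `X` which is cyclic over the subring `ℤ_p[[T]]`, for every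
`α ∈ ℤ_p` at least one of the `𝔽_p`-vector spaces `X/(w_α·X + p·X)` and `X/(w_{−α}·X + p·X)`
has dimension at most `1`, where `w_α := (1+S)^α(1+T) − 1`; that is,
`min(rank_p X/w_α X, rank_p X/w_{−α} X) ≤ 1`. -/
theorem fpRankQuot_le_one_or (p : ℕ) [Fact p.Prime] (hp : Odd p) (X : Type) [AddCommGroup X]
    [Module (Lambda p) X] (x : X)
    (hx : ∀ y : X, ∃ c : PowerSeries ℤ_[p],
      y = (PowerSeries.C (R := PowerSeries ℤ_[p]) c : Lambda p) • x)
    (α : ℤ_[p]) :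
    fpRankQuot p X (onePlusSPow p α * (1 + Tvar p) - 1) ≤ 1 ∨
    fpRankQuot p X (onePlusSPow p (-α) * (1 + Tvar p) - 1) ≤ 1 := by
  obtain ⟨f, hf⟩ := hx ((PowerSeries.X : Lambda p) • x)
  have h0 : ((PowerSeries.X : Lambda p) - PowerSeries.C f) • x = 0 := by
    rw [sub_smul, hf, sub_self]
  have hann : ∀ y : X, ((PowerSeries.X : Lambda p) - PowerSeries.C f) • y = 0 := by
    intro y
    obtain ⟨c, rfl⟩ := hx y
    rw [smul_smul, mul_comm, ← smul_smul, h0, smul_zero]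
  rcases my_Tvar_mem_or p hp f α with h | h
  · left
    exact my_rank_aux p X x hx f hann _ h
  · right
    exact my_rank_aux p X x hx f hann _ h
end
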